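/- Let T be a finite tree with at least 2 vertices and let c be a proper coloring of T. Then there exists an up-color dominating c-set D of T of minimum cardinality among all up-color dominating c-sets of T such that every vertex of D that is a leaf of T (i.e., has degree 1) is a local maximum for c. -/
import Mathlib


/-- `D` is an up-color dominating `c`-set of `G`. -/
def IsUCDomSet {V : Type*} (G : SimpleGraph V) (c : V → ℕ) (D : Finset V) : Prop :=
  (∀ v ∉ D, ∃ d ∈ D, G.Adj v d ∧ c v < c d) ∧ ∀ d ∈ D, 1 ≤ c d

theorem stmt_13 {V : Type*} [Fintype V] (T : SimpleGraph V) [DecidableRel T.Adj]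
    (hT : T.IsTree) (hcard : 2 ≤ Fintype.card V)
    (c : V → ℕ) (hc : ∀ ⦃u v⦄, T.Adj u v → c u ≠ c v) :
    ∃ D : Finset V, IsUCDomSet T c D ∧
      (∀ D' : Finset V, IsUCDomSet T c D' → D.card ≤ D'.card) ∧
      ∀ v ∈ D, T.degree v = 1 → ∀ u, T.Adj v u → c u ≤ c v := by
  classical
  -- every vertex has a neighbor
  have hnbr : ∀ v : V, ∃ u, T.Adj v u := by
    intro v
    obtain ⟨u, hu⟩ := Fintype.exists_ne_of_one_lt_card (by omega) v
    obtain ⟨p⟩ := hT.isConnected.preconnected v u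
    cases p with
    | nil => exact absurd rfl hu.symm
    | cons h q => exact ⟨_, h⟩
  -- leaves have a unique neighbor
  have huniq : ∀ d, T.degree d = 1 → ∀ u w, T.Adj d u → T.Adj d w → u = w := by
    intro d hd u w hu hw
    have h1 : (T.neighborFinset d).card = 1 := by
      rwa [T.card_neighborFinset_eq_degree]
    obtain ⟨a, ha⟩ := Finset.card_eq_one.mp h1
    have h2 : u ∈ T.neighborFinset d := by rwa [SimpleGraph.mem_neighborFinset]
    have h3 : w ∈ T.neighborFinset d := by rwa [SimpleGraph.mem_neighborFinset]
    rw [ha, Finset.mem_singleton] at h2 h3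
    rw [h2, h3]
  -- existence of some UC-dominating set
  have hex : ∃ D : Finset V, IsUCDomSet T c D := by
    refine ⟨Finset.univ.filter (fun v => 1 ≤ c v), ?_, ?_⟩
    · intro v hv
      simp only [Finset.mem_filter, Finset.mem_univ, true_and, not_le,
        Nat.lt_one_iff] at hv
      obtain ⟨u, hu⟩ := hnbr v
      have hne : c v ≠ c u := hc hu
      refine ⟨u, ?_, hu, by omega⟩
      simp only [Finset.mem_filter, Finset.mem_univ, true_and]
      omega
    · intro d hd
      simpa using (Finset.mem_filter.mp hd).2
  -- set of all UC-dominating sets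
  set S : Finset (Finset V) := Finset.univ.filter (fun D => IsUCDomSet T c D) with hS
  have hSmem : ∀ D : Finset V, D ∈ S ↔ IsUCDomSet T c D := by
    intro D; simp [hS]
  have hSne : S.Nonempty := by
    obtain ⟨D, hD⟩ := hex
    exact ⟨D, (hSmem D).mpr hD⟩
  obtain ⟨D1, hD1S, hD1min⟩ := S.exists_min_image Finset.card hSne
  -- among min-card ones, minimize number of bad leaves
  set P : V → Prop := fun d => T.degree d = 1 ∧ ∃ u, T.Adj d u ∧ c d < c u with hP
  set S' : Finset (Finset V) := S.filter (fun D => D.card = D1.card) with hS'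
  have hS'ne : S'.Nonempty := ⟨D1, by simp [hS', hD1S]⟩
  obtain ⟨D, hDS', hDmin⟩ := S'.exists_min_image (fun D => (D.filter P).card) hS'ne
  have hDS : D ∈ S := (Finset.mem_filter.mp hDS').1
  have hDcard : D.card = D1.card := (Finset.mem_filter.mp hDS').2
  have hDdom : IsUCDomSet T c D := (hSmem D).mp hDS
  refine ⟨D, hDdom, ?_, ?_⟩
  · intro D' hD'
    rw [hDcard]
    exact hD1min D' ((hSmem D').mpr hD')
  · -- no bad leaves: by contradiction
    by_contra hbad
    push_neg at hbad
    obtain ⟨d, hdD, hdeg, u, hadj, hcu⟩ := hbad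
    have hdu : d ≠ u := hadj.ne
    have hnbrd : ∀ w, T.Adj d w → w = u := fun w hw => huniq d hdeg w u hw hadj
    by_cases huD : u ∈ D
    · -- D.erase d is a smaller UC-dominating set: contradiction with card minimality
      have hdom' : IsUCDomSet T c (D.erase d) := by
        constructor
        · intro v hv
          by_cases hvd : v = d
          · subst hvd
            exact ⟨u, Finset.mem_erase.mpr ⟨hdu.symm, huD⟩, hadj, hcu⟩
          · have hvD : v ∉ D := fun h => hv (Finset.mem_erase.mpr ⟨hvd, h⟩)
            obtain ⟨w, hwD, hwadj, hwc⟩ := hDdom.1 v hvD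
            have hwd : w ≠ d := by
              intro h; subst h
              exact hvD (hnbrd v hwadj.symm ▸ huD)
            exact ⟨w, Finset.mem_erase.mpr ⟨hwd, hwD⟩, hwadj, hwc⟩
        · intro x hx
          exact hDdom.2 x (Finset.mem_of_mem_erase hx)
      have h1 : D1.card ≤ (D.erase d).card :=
        hD1min _ ((hSmem _).mpr hdom')
      have h2 : (D.erase d).card < D.card := Finset.card_erase_lt_of_mem hdD
      omega
    · -- swap d for u: same card, fewer bad leaves
      set D' : Finset V := insert u (D.erase d) with hD'def
      have huE : u ∉ D.erase d := fun h => huD (Finset.mem_of_mem_erase h)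
      have hcard' : D'.card = D.card := by
        rw [hD'def, Finset.card_insert_of_notMem huE,
          Finset.card_erase_of_mem hdD]
        have : 0 < D.card := Finset.card_pos.mpr ⟨d, hdD⟩
        omega
      have hdom' : IsUCDomSet T c D' := by
        constructor
        · intro v hv
          rw [hD'def, Finset.mem_insert, not_or] at hv
          obtain ⟨hvu, hvE⟩ := hv
          by_cases hvd : v = d
          · subst hvd
            exact ⟨u, by simp [hD'def], hadj, hcu⟩
          · have hvD : v ∉ D := fun h => hvE (Finset.mem_erase.mpr ⟨hvd, h⟩)
            obtain ⟨w, hwD, hwadj, hwc⟩ := hDdom.1 v hvD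
            have hwd : w ≠ d := by
              intro h; subst h
              exact hvu (hnbrd v hwadj.symm)
            exact ⟨w, by simp [hD'def, Finset.mem_erase, hwd, hwD], hwadj, hwc⟩
        · intro x hx
          rw [hD'def, Finset.mem_insert] at hx
          rcases hx with h | h
          · subst h
            have := hDdom.2 d hdD
            omega
          · exact hDdom.2 x (Finset.mem_of_mem_erase h)
      have hD'S' : D' ∈ S' := by
        rw [hS', Finset.mem_filter]
        exact ⟨(hSmem D').mpr hdom', by rw [hcard', hDcard]⟩
      -- bad leaves of D' are a subset of bad leaves of D minus d
      have hsub : D'.filter P ⊆ (D.filter P).erase d := by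
        intro x hx
        rw [Finset.mem_filter] at hx
        obtain ⟨hxD', hxP⟩ := hx
        rw [hD'def, Finset.mem_insert] at hxD'
        have hxu : x ≠ u := by
          intro h; subst h
          obtain ⟨hdegx, w, hwadj, hwc⟩ := hxP
          have := huniq x hdegx w d hwadj hadj.symm
          subst this
          omega
        rcases hxD' with h | h
        · exact absurd h hxu
        · rw [Finset.mem_erase] at h
          exact Finset.mem_erase.mpr ⟨h.1, Finset.mem_filter.mpr ⟨h.2, hxP⟩⟩
      have hdbad : d ∈ D.filter P := Finset.mem_filter.mpr ⟨hdD, hdeg, u, hadj, hcu⟩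
      have h1 : (D'.filter P).card ≤ ((D.filter P).erase d).card :=
        Finset.card_le_card hsub
      have h2 : ((D.filter P).erase d).card < (D.filter P).card :=
        Finset.card_erase_lt_of_mem hdbad
      have h3 := hDmin D' hD'S'
      omega
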